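/- Let g be the 3-state cellular automaton on states Fin 3 defined by g(i,j,k) = 0 if j = 0 and i = k, and g(i,j,k) = max(i, max(j, k)) otherwise. For w : Fin n → Fin 3, let p₂(w) : Option ℕ be the least index i with w i = 2 (none if no such index), and let p₁(w) : Option ℕ be the least index i with w i = 1 such that w e ≠ 2 for all e ≤ i (none if no such index). Then for every n ≥ 1 and all u, v : Fin n → Fin 3, g^n(u, 0, v) = 0 if and only if both: (p₂(u) = none and p₂(v) = none, or p₂(u) = p₂(v)), and (p₁(u) = none and p₁(v) = none, or p₁(u) = p₁(v)). -/

import Mathlib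

/-- The `n`-th iterate of a one-dimensional CA local rule `f`, applied to an
assignment `x` of states to integer positions. It only depends on positions `-n,…,n`:
`caIter f 1 x = f (x (-1)) (x 0) (x 1)` and
`caIter f (n+1) x = f (caIter f n (x shifted left)) (caIter f n x) (caIter f n (x shifted right))`. -/
def caIter {Q : Type*} (f : Q → Q → Q → Q) : ℕ → (ℤ → Q) → Q
  | 0, x => x 0
  | n + 1, x =>
      f (caIter f n fun i => x (i - 1)) (caIter f n x) (caIter f n fun i => x (i + 1))

/-- The assignment of states to integer positions determined by left cells `u`
(`u i` at position `-(i+1)`), center `c` (position `0`) and right cells `v`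
(`v i` at position `i+1`); positions outside `-n,…,n` (irrelevant for `caIter f n`)
are padded with `c`. -/
def caEmbed {Q : Type*} (n : ℕ) (u : Fin n → Q) (c : Q) (v : Fin n → Q) : ℤ → Q :=
  fun i =>
    if h : 1 ≤ i ∧ i ≤ (n : ℤ) then v ⟨(i - 1).toNat, by omega⟩
    else if h' : 1 ≤ -i ∧ -i ≤ (n : ℤ) then u ⟨(-i - 1).toNat, by omega⟩
    else c

/-- `f^n(u, c, v)`. -/
def caApply {Q : Type*} (f : Q → Q → Q → Q) (n : ℕ) (u : Fin n → Q) (c : Q)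
    (v : Fin n → Q) : Q :=
  caIter f n (caEmbed n u c v)

/-- Number of distinct rows of the matrix `M_c^n`. -/
noncomputable def caRows {Q : Type*} (f : Q → Q → Q → Q) (n : ℕ) (c : Q) : ℕ :=
  Set.ncard {g : (Fin n → Q) → Q | ∃ u : Fin n → Q, g = fun v => caApply f n u c v}

/-- Number of distinct columns of the matrix `M_c^n`. -/
noncomputable def caCols {Q : Type*} (f : Q → Q → Q → Q) (n : ℕ) (c : Q) : ℕ :=
  Set.ncard {g : (Fin n → Q) → Q | ∃ v : Fin n → Q, g = fun u => caApply f n u c v}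

/-- `d_n(f)` for an ECA `f`. -/
noncomputable def dnECA (f : Bool → Bool → Bool → Bool) (n : ℕ) : ℕ :=
  max (max (caRows f n false) (caCols f n false)) (max (caRows f n true) (caCols f n true))

/-- `p₂ w`: the least index `i` with `w i = 2` (`none` if there is no such index). -/
def p2 {n : ℕ} (w : Fin n → Fin 3) : Option ℕ :=
  ((List.finRange n).find? fun i => w i = 2).map Fin.val

/-- `p₁ w`: the least index `i` with `w i = 1` such that `w e ≠ 2` for all `e ≤ i`
(`none` if there is no such index). -/
def p1 {n : ℕ} (w : Fin n → Fin 3) : Option ℕ :=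
  ((List.finRange n).find? fun i =>
    w i = 1 && decide (∀ e : Fin n, e ≤ i → w e ≠ 2)).map Fin.val

set_option linter.unusedTactic false
set_option linter.unnecessarySeqFocus false

namespace ThreeStateAux

noncomputable def S (x : ℤ → Fin 3) (a b : ℤ) : Fin 3 := (Finset.Icc a b).sup x

lemma le_S {x : ℤ → Fin 3} {a b : ℤ} (q : ℤ) (h1 : a ≤ q) (h2 : q ≤ b) : x q ≤ S x a b :=
  Finset.le_sup (Finset.mem_Icc.2 ⟨h1, h2⟩)

lemma S_le {x : ℤ → Fin 3} {a b : ℤ} {m : Fin 3} (h : ∀ q, a ≤ q → q ≤ b → x q ≤ m) :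
    S x a b ≤ m :=
  Finset.sup_le fun q hq => h q (Finset.mem_Icc.1 hq).1 (Finset.mem_Icc.1 hq).2

lemma S_empty {x : ℤ → Fin 3} {a b : ℤ} (h : b < a) : S x a b = 0 := by
  rw [S, Finset.Icc_eq_empty (by omega), Finset.sup_empty]; rfl

lemma S_singleton {x : ℤ → Fin 3} {a : ℤ} : S x a a = x a := by
  rw [S, Finset.Icc_self, Finset.sup_singleton]

lemma S_mono {x : ℤ → Fin 3} {a b a' b' : ℤ} (h1 : a' ≤ a) (h2 : b ≤ b') :
    S x a b ≤ S x a' b' :=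
  S_le fun q hq1 hq2 => le_S q (by omega) (by omega)

lemma S_split {x : ℤ → Fin 3} {a b c : ℤ} (h1 : a ≤ b + 1) (h2 : b ≤ c) :
    S x a c = max (S x a b) (S x (b + 1) c) := by
  apply le_antisymm
  · refine S_le fun q hq1 hq2 => ?_
    rcases le_or_gt q b with h | h
    · exact le_max_of_le_left (le_S q hq1 h)
    · exact le_max_of_le_right (le_S q (by omega) hq2)
  · exact max_le (S_mono le_rfl (by omega)) (S_mono (by omega) le_rfl)

lemma S_shift_left {x : ℤ → Fin 3} {a b : ℤ} :
    S (fun i => x (i - 1)) a b = S x (a - 1) (b - 1) := by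
  apply le_antisymm
  · exact S_le fun q h1 h2 => le_S (q - 1) (by omega) (by omega)
  · refine S_le fun q h1 h2 => ?_
    have := le_S (x := fun i => x (i - 1)) (q + 1) (a := a) (b := b) (by omega) (by omega)
    simpa using this

lemma S_shift_right {x : ℤ → Fin 3} {a b : ℤ} :
    S (fun i => x (i + 1)) a b = S x (a + 1) (b + 1) := by
  apply le_antisymm
  · exact S_le fun q h1 h2 => le_S (q + 1) (by omega) (by omega)
  · refine S_le fun q h1 h2 => ?_
    have := le_S (x := fun i => x (i + 1)) (q - 1) (a := a) (b := b) (by omega) (by omega)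
    simpa using this

lemma S_rev {x : ℤ → Fin 3} {a b : ℤ} :
    S (fun i => x (-i)) a b = S x (-b) (-a) := by
  apply le_antisymm
  · exact S_le fun q h1 h2 => le_S (-q) (by omega) (by omega)
  · refine S_le fun q h1 h2 => ?_
    have := le_S (x := fun i => x (-i)) (-q) (a := a) (b := b) (by omega) (by omega)
    simpa using this

def Zc (x : ℤ → Fin 3) (t : ℕ) : Prop :=
  x 0 = 0 ∧ ∀ s : ℤ, 1 ≤ s → s ≤ (t : ℤ) → S x (-s) (-1) = S x 1 s

open Classical in
noncomputable def Fc (x : ℤ → Fin 3) (t : ℕ) : Fin 3 :=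
  if Zc x t then 0 else S x (-(t : ℤ)) t

lemma Zc_mono {x : ℤ → Fin 3} {t t' : ℕ} (h : Zc x t) (h' : t' ≤ t) : Zc x t' :=
  ⟨h.1, fun s h1 h2 => h.2 s h1 (by omega)⟩

lemma Fc_le {x : ℤ → Fin 3} {t : ℕ} : Fc x t ≤ S x (-(t : ℤ)) t := by
  rw [Fc]; split_ifs with h
  · exact Fin.zero_le _
  · exact le_rfl

lemma S_eq_zero_Zc {x : ℤ → Fin 3} {t : ℕ} (h : S x (-(t : ℤ)) t = 0) : Zc x t := by
  have hz : ∀ q : ℤ, -(t : ℤ) ≤ q → q ≤ (t : ℤ) → x q = 0 := fun q h1 h2 =>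
    le_antisymm (h ▸ le_S q h1 h2) (Fin.zero_le _)
  refine ⟨hz 0 (by omega) (by omega), fun s h1 h2 => ?_⟩
  have e1 : S x (-s) (-1) = 0 :=
    le_antisymm (S_le fun q hq1 hq2 => (hz q (by omega) (by omega)).le) (Fin.zero_le _)
  have e2 : S x 1 s = 0 :=
    le_antisymm (S_le fun q hq1 hq2 => (hz q (by omega) (by omega)).le) (Fin.zero_le _)
  rw [e1, e2]

lemma Zc_rev {x : ℤ → Fin 3} {t : ℕ} (h : Zc x t) : Zc (fun i => x (-i)) t := by
  refine ⟨by simpa using h.1, fun s h1 h2 => ?_⟩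
  rw [S_rev, S_rev]
  simp only [neg_neg]
  exact (h.2 s h1 h2).symm

lemma Fc_rev {x : ℤ → Fin 3} {t : ℕ} : Fc (fun i => x (-i)) t = Fc x t := by
  have hzz : Zc (fun i => x (-i)) t ↔ Zc x t := by
    constructor
    · intro h
      have := Zc_rev h
      simpa using this
    · exact Zc_rev
  rw [Fc, Fc]
  split_ifs with h1 h2 h2
  · rfl
  · exact absurd (hzz.1 h1) h2
  · exact absurd (hzz.2 h2) h1
  · rw [S_rev, neg_neg]

-- the common prefix-max equality at full range, given Zc
lemma Zc_S_right {x : ℤ → Fin 3} {t : ℕ} (h : Zc x t) :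
    S x (-(t : ℤ)) t = S x 1 t := by
  apply le_antisymm
  · refine S_le fun q hq1 hq2 => ?_
    rcases lt_trichotomy q 0 with hq | rfl | hq
    · rcases Nat.eq_zero_or_pos t with rfl | ht
      · exfalso; omega
      · calc x q ≤ S x (-(t : ℤ)) (-1) := le_S q hq1 (by omega)
          _ = S x 1 t := h.2 (t : ℤ) (by omega) le_rfl
    · rw [h.1]; exact Fin.zero_le _
    · exact le_S q (by omega) hq2
  · exact S_mono (by omega) le_rfl

lemma Zc_S_left {x : ℤ → Fin 3} {t : ℕ} (h : Zc x t) :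
    S x (-(t : ℤ)) t = S x (-(t : ℤ)) (-1) := by
  have := Zc_S_right (Zc_rev h)
  rw [S_rev, S_rev] at this
  simp only [neg_neg] at this
  calc S x (-(t : ℤ)) t = S x (-(t:ℤ)) (t:ℤ) := rfl
    _ = S x (-(t:ℤ)) (-1) := by
        rcases Nat.eq_zero_or_pos t with rfl | ht
        · rw [show S x (-((0:ℕ):ℤ)) (-1) = 0 from S_empty (by omega)]
          simp only [Nat.cast_zero, neg_zero, S_singleton]
          exact h.1
        · apply le_antisymm
          · refine S_le fun q hq1 hq2 => ?_
            rcases lt_trichotomy q 0 with hq | rfl | hq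
            · exact le_S q hq1 (by omega)
            · rw [h.1]; exact Fin.zero_le _
            · calc x q ≤ S x 1 (t:ℤ) := le_S q (by omega) hq2
                _ = S x (-(t:ℤ)) (-1) := (h.2 (t:ℤ) (by omega) le_rfl).symm
          · exact S_mono le_rfl (by omega)

lemma doubleZero {x : ℤ → Fin 3} {t : ℕ} (h : Zc x t)
    (h' : Zc (fun i => x (i - 1)) t) :
    ∀ s : ℕ, s ≤ t + 1 → S x (-(s : ℤ)) (-1) = 0 := by
  have hx1 : x (-1) = 0 := by simpa using h'.1
  intro s
  induction s using Nat.strong_induction_on with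
  | _ s ih =>
    match s with
    | 0 => intro _; exact S_empty (by omega)
    | 1 => intro _
           rw [show (-((1:ℕ) : ℤ)) = (-1 : ℤ) by norm_num, S_singleton]
           exact hx1
    | (k+2) =>
      intro hs
      have e1 : S x (-((k:ℤ)+2)) (-1) = max (S x (-((k:ℤ)+2)) (-2)) (S x (-1) (-1)) :=
        S_split (by omega) (by omega)
      have e2 : S x (-((k:ℤ)+2)) (-2) = S x 0 (k:ℤ) := by
        have := h'.2 ((k:ℤ)+1) (by omega) (by push_cast; omega)
        rw [S_shift_left, S_shift_left] at this
        calc S x (-((k:ℤ)+2)) (-2) = S x (-((k:ℤ)+1) - 1) (-1 - 1) := by ring_nf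
          _ = S x (1 - 1) ((k:ℤ)+1-1) := this
          _ = S x 0 (k:ℤ) := by ring_nf
      have e3 : S x 0 (k:ℤ) = S x 1 (k:ℤ) := by
        rw [S_split (a := (0:ℤ)) (b := (0:ℤ)) (c := (k:ℤ)) (by omega) (by omega),
          S_singleton, h.1]
        exact max_eq_right (Fin.zero_le _)
      have e4 : S x 1 (k:ℤ) = S x (-(k:ℤ)) (-1) := by
        rcases Nat.eq_zero_or_pos k with rfl | hk
        · rw [S_empty (by omega), S_empty (by omega)]
        · exact (h.2 (k:ℤ) (by omega) (by omega)).symm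
      have e5 : S x (-(k:ℤ)) (-1) = 0 := ih k (by omega) (by omega)
      have : S x (-((k:ℤ)+2)) (-1) = 0 := by
        rw [e1, e2, e3, e4, e5, S_singleton, hx1]
        rfl
      calc S x (-((k+2:ℕ) : ℤ)) (-1) = S x (-((k:ℤ)+2)) (-1) := by norm_num
        _ = 0 := this


lemma keyA {x : ℤ → Fin 3} {t : ℕ} (h : Zc x t) :
    Fc (fun i => x (i - 1)) t = S x (-(t : ℤ) - 1) (-1) := by
  rw [Fc]
  split_ifs with hz
  · have := doubleZero h hz (t + 1) le_rfl
    rw [show (-((t+1:ℕ):ℤ)) = -(t:ℤ) - 1 by push_cast; ring] at this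
    exact this.symm
  · rw [S_shift_left]
    rcases Nat.eq_zero_or_pos t with rfl | ht
    · norm_num
    · have e : S x (-(t:ℤ) - 1) ((t:ℤ) - 1)
          = max (S x (-(t:ℤ) - 1) (-1)) (S x 0 ((t:ℤ) - 1)) :=
        S_split (by omega) (by omega)
      have hle : S x 0 ((t:ℤ) - 1) ≤ S x (-(t:ℤ) - 1) (-1) := by
        rw [S_split (a := (0:ℤ)) (b := (0:ℤ)) (c := (t:ℤ) - 1) (by omega) (by omega),
          S_singleton, h.1]
        refine max_le (Fin.zero_le _) ?_
        calc S x (0+1) ((t:ℤ) - 1) ≤ S x 1 (t:ℤ) := S_mono (by omega) (by omega)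
          _ = S x (-(t:ℤ)) (-1) := (h.2 (t:ℤ) (by omega) le_rfl).symm
          _ ≤ S x (-(t:ℤ) - 1) (-1) := S_mono (by omega) le_rfl
      rw [e, max_eq_left hle]

lemma keyC {x : ℤ → Fin 3} {t : ℕ} (h : Zc x t) :
    Fc (fun i => x (i + 1)) t = S x 1 ((t : ℤ) + 1) := by
  have hA := keyA (Zc_rev h)
  have hfun : (fun i : ℤ => (fun j : ℤ => x (-j)) (i - 1))
      = (fun i : ℤ => (fun j : ℤ => x (j + 1)) (-i)) := by
    funext i
    show x (-(i - 1)) = x (-i + 1)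
    congr 1
    ring
  rw [hfun, Fc_rev (x := fun j : ℤ => x (j + 1)), S_rev] at hA
  rw [hA]
  congr 1 <;> ring

lemma mainInv (g : Fin 3 → Fin 3 → Fin 3 → Fin 3)
    (hg : ∀ i j k : Fin 3, g i j k = if j = 0 ∧ i = k then 0 else max i (max j k)) :
    ∀ (t : ℕ) (x : ℤ → Fin 3), caIter g t x = Fc x t := by
  intro t
  induction t with
  | zero =>
    intro x
    show x 0 = Fc x 0
    rw [Fc]; split_ifs with h
    · exact h.1
    · simp only [Nat.cast_zero, neg_zero, S_singleton]
  | succ t ih =>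
    intro x
    show g (caIter g t fun i => x (i-1)) (caIter g t x) (caIter g t fun i => x (i+1))
        = Fc x (t+1)
    rw [ih, ih, ih, hg]
    by_cases hzt1 : Zc x (t+1)
    · have hzt : Zc x t := Zc_mono hzt1 (Nat.le_succ t)
      have hB : Fc x t = 0 := by rw [Fc, if_pos hzt]
      have hR : Fc x (t+1) = 0 := by rw [Fc, if_pos hzt1]
      rw [keyA hzt, keyC hzt, hB, hR]
      have heq : S x (-(t:ℤ) - 1) (-1) = S x 1 ((t:ℤ)+1) := by
        have := hzt1.2 ((t:ℤ)+1) (by omega) (by push_cast; omega)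
        rwa [show -((t:ℤ)+1) = -(t:ℤ) - 1 by ring] at this
      rw [if_pos ⟨rfl, heq⟩]
    · have hR : Fc x (t+1) = S x (-(t:ℤ) - 1) ((t:ℤ)+1) := by
        rw [Fc, if_neg hzt1]
        congr 1 <;> push_cast <;> ring
      rw [hR]
      by_cases hzt : Zc x t
      · have hB : Fc x t = 0 := by rw [Fc, if_pos hzt]
        rw [keyA hzt, keyC hzt, hB]
        have hne : S x (-(t:ℤ) - 1) (-1) ≠ S x 1 ((t:ℤ)+1) := by
          intro he
          apply hzt1
          refine ⟨hzt.1, fun s h1 h2 => ?_⟩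
          rcases eq_or_lt_of_le h2 with heq | hlt
          · rw [heq]
            rwa [show -(((t+1:ℕ)):ℤ) = -(t:ℤ) - 1 by push_cast; ring,
              show (((t+1:ℕ)):ℤ) = (t:ℤ) + 1 by push_cast; ring]
          · exact hzt.2 s h1 (by push_cast at hlt; omega)
        rw [if_neg (fun hc => hne hc.2)]
        rw [max_eq_right (Fin.zero_le (S x 1 ((t:ℤ)+1)))]
        rw [S_split (a := -(t:ℤ) - 1) (b := (0:ℤ)) (c := (t:ℤ)+1) (by omega) (by omega),
          show (0:ℤ) + 1 = 1 by ring,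
          S_split (a := -(t:ℤ) - 1) (b := (-1:ℤ)) (c := (0:ℤ)) (by omega) (by omega),
          show (-1:ℤ) + 1 = 0 by ring, S_singleton, hzt.1,
          max_eq_left (Fin.zero_le (S x (-(t:ℤ) - 1) (-1)))]
      · have hB : Fc x t = S x (-(t:ℤ)) (t:ℤ) := by rw [Fc, if_neg hzt]
        have hBne : S x (-(t:ℤ)) (t:ℤ) ≠ 0 := fun h0 => hzt (S_eq_zero_Zc h0)
        rw [hB, if_neg (fun hc => hBne hc.1)]
        apply le_antisymm
        · refine max_le ?_ (max_le ?_ ?_)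
          · calc Fc (fun i => x (i-1)) t ≤ S (fun i => x (i-1)) (-(t:ℤ)) (t:ℤ) := Fc_le
              _ = S x (-(t:ℤ) - 1) ((t:ℤ) - 1) := S_shift_left
              _ ≤ S x (-(t:ℤ) - 1) ((t:ℤ) + 1) := S_mono le_rfl (by omega)
          · exact S_mono (by omega) (by omega)
          · calc Fc (fun i => x (i+1)) t ≤ S (fun i => x (i+1)) (-(t:ℤ)) (t:ℤ) := Fc_le
              _ = S x (-(t:ℤ) + 1) ((t:ℤ) + 1) := S_shift_right
              _ ≤ S x (-(t:ℤ) - 1) ((t:ℤ) + 1) := S_mono (by omega) le_rfl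
        · refine S_le fun q hq1 hq2 => ?_
          rcases le_or_gt q (-(t:ℤ) - 1) with hq | hq
          · have hq' : q = -(t:ℤ) - 1 := by omega
            subst hq'
            by_cases hzm : Zc (fun i => x (i-1)) t
            · have := Zc_S_right hzm
              rw [S_shift_left, S_shift_left] at this
              have hx : x (-(t:ℤ) - 1) ≤ S x (-(t:ℤ) - 1) ((t:ℤ) - 1) :=
                le_S _ le_rfl (by omega)
              rw [this] at hx
              refine le_max_of_le_right (le_max_of_le_left ?_)
              calc x (-(t:ℤ) - 1) ≤ S x (1 - 1) ((t:ℤ) - 1) := hx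
                _ ≤ S x (-(t:ℤ)) (t:ℤ) := S_mono (by omega) (by omega)
            · have hA : Fc (fun i => x (i-1)) t = S x (-(t:ℤ) - 1) ((t:ℤ) - 1) := by
                rw [Fc, if_neg hzm, S_shift_left]
              refine le_max_of_le_left ?_
              rw [hA]
              exact le_S _ le_rfl (by omega)
          · rcases le_or_gt q (t:ℤ) with hq' | hq'
            · exact le_max_of_le_right (le_max_of_le_left (le_S q (by omega) hq'))
            · have hq'' : q = (t:ℤ) + 1 := by omega
              subst hq''
              by_cases hzp : Zc (fun i => x (i+1)) t
              · have := Zc_S_left hzp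
                rw [S_shift_right, S_shift_right] at this
                have hx : x ((t:ℤ) + 1) ≤ S x (-(t:ℤ) + 1) ((t:ℤ) + 1) :=
                  le_S _ (by omega) le_rfl
                rw [this] at hx
                refine le_max_of_le_right (le_max_of_le_left ?_)
                calc x ((t:ℤ) + 1) ≤ S x (-(t:ℤ) + 1) (-1 + 1) := hx
                  _ ≤ S x (-(t:ℤ)) (t:ℤ) := S_mono (by omega) (by omega)
              · have hC : Fc (fun i => x (i+1)) t = S x (-(t:ℤ) + 1) ((t:ℤ) + 1) := by
                  rw [Fc, if_neg hzp, S_shift_right]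
                refine le_max_of_le_right (le_max_of_le_right ?_)
                rw [hC]
                exact le_S _ (by omega) le_rfl


/-! ### Word-level prefix maxima -/

lemma fin3_cases (a : Fin 3) : a = 0 ∨ a = 1 ∨ a = 2 := by omega

noncomputable def Pm {n : ℕ} (w : Fin n → Fin 3) (s : ℕ) : Fin 3 :=
  (Finset.univ.filter fun i : Fin n => (i : ℕ) < s).sup w

lemma le_Pm {n : ℕ} {w : Fin n → Fin 3} {s : ℕ} {i : Fin n} (h : (i : ℕ) < s) :
    w i ≤ Pm w s :=
  Finset.le_sup (by simp [h])

lemma Pm_le {n : ℕ} {w : Fin n → Fin 3} {s : ℕ} {m : Fin 3}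
    (h : ∀ i : Fin n, (i : ℕ) < s → w i ≤ m) : Pm w s ≤ m :=
  Finset.sup_le fun i hi => h i (by simpa using hi)

lemma Pm_zero {n : ℕ} {w : Fin n → Fin 3} : Pm w 0 = 0 :=
  le_antisymm (Pm_le fun i hi => absurd hi (by omega)) (Fin.zero_le _)

lemma Pm_stab {n : ℕ} {w : Fin n → Fin 3} {s : ℕ} (h : n ≤ s) : Pm w s = Pm w n :=
  le_antisymm (Pm_le fun i _ => le_Pm i.isLt)
    (Pm_le fun i _ => le_Pm (lt_of_lt_of_le i.isLt h))

lemma Pm_eq_two_iff {n : ℕ} {w : Fin n → Fin 3} {s : ℕ} :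
    Pm w s = 2 ↔ ∃ i : Fin n, (i : ℕ) < s ∧ w i = 2 := by
  constructor
  · intro h
    by_contra hc
    push_neg at hc
    have hle : Pm w s ≤ 1 := Pm_le fun i hi => by have := hc i hi; omega
    omega
  · rintro ⟨i, hi, h2⟩
    have h1 := le_Pm (w := w) hi
    rw [h2] at h1
    have h2' : Pm w s ≤ 2 := Pm_le fun _ _ => by omega
    omega

lemma Pm_eq_zero_iff {n : ℕ} {w : Fin n → Fin 3} {s : ℕ} :
    Pm w s = 0 ↔ ∀ i : Fin n, (i : ℕ) < s → w i = 0 := by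
  constructor
  · intro h i hi
    have := le_Pm (w := w) hi
    rw [h] at this
    omega
  · intro h
    exact le_antisymm (Pm_le fun i hi => by rw [h i hi]) (Fin.zero_le _)

/-! ### find? on finRange -/

lemma find?_min_aux {n : ℕ} {p : Fin n → Bool} :
    ∀ (l : List (Fin n)), l.Pairwise (· < ·) → ∀ {a : Fin n}, l.find? p = some a →
      ∀ b ∈ l, b < a → p b = false := by
  intro l
  induction l with
  | nil => intro _ a ha; simp at ha
  | cons c tl ih =>
    intro hpw a ha b hb hba
    by_cases hc : p c = true
    · rw [List.find?_cons_of_pos hc] at ha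
      injection ha with ha
      subst ha
      rcases List.mem_cons.1 hb with rfl | hb
      · exact absurd hba (lt_irrefl _)
      · exact absurd hba (asymm ((List.pairwise_cons.1 hpw).1 b hb))
    · rw [List.find?_cons_of_neg hc] at ha
      rcases List.mem_cons.1 hb with rfl | hb
      · simpa using hc
      · exact ih (List.pairwise_cons.1 hpw).2 ha b hb hba

lemma find?_spec {n : ℕ} {p : Fin n → Bool} {i : Fin n}
    (h : (List.finRange n).find? p = some i) :
    p i = true ∧ ∀ j : Fin n, j < i → p j = false :=
  ⟨List.find?_some h, fun j hj =>
    find?_min_aux _ (List.pairwise_lt_finRange n) h j (List.mem_finRange j) hj⟩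

lemma find?_le {n : ℕ} {p : Fin n → Bool} {i : Fin n} (h : p i = true) :
    ∃ j : Fin n, (List.finRange n).find? p = some j ∧ j ≤ i := by
  cases hf : (List.finRange n).find? p with
  | none => exact absurd h (by simpa using List.find?_eq_none.1 hf i (List.mem_finRange i))
  | some j =>
    refine ⟨j, rfl, ?_⟩
    by_contra hij
    push_neg at hij
    have := (find?_spec hf).2 i hij
    rw [h] at this
    exact Bool.noConfusion this

lemma findMap_some_iff {n : ℕ} {p : Fin n → Bool} {Q : Fin n → Prop}
    (hpq : ∀ i, p i = true ↔ Q i) {m : ℕ} :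
    ((List.finRange n).find? p).map Fin.val = some m ↔
      ∃ i : Fin n, (i : ℕ) = m ∧ Q i ∧ ∀ j : Fin n, j < i → ¬ Q j := by
  constructor
  · intro h
    obtain ⟨i, hf, him⟩ := Option.map_eq_some_iff.1 h
    obtain ⟨hp, hmin⟩ := find?_spec hf
    refine ⟨i, him, (hpq i).1 hp, fun j hj hQ => ?_⟩
    have hmj := hmin j hj
    rw [(hpq j).2 hQ] at hmj
    exact Bool.noConfusion hmj
  · rintro ⟨i, rfl, hQ, hmin⟩
    obtain ⟨j, hf, hji⟩ := find?_le ((hpq i).2 hQ)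
    rcases eq_or_lt_of_le hji with rfl | hlt
    · rw [hf]; rfl
    · exact absurd ((hpq j).1 (find?_spec hf).1) (hmin j hlt)

lemma findMap_none_iff {n : ℕ} {p : Fin n → Bool} {Q : Fin n → Prop}
    (hpq : ∀ i, p i = true ↔ Q i) :
    ((List.finRange n).find? p).map Fin.val = none ↔ ∀ i : Fin n, ¬ Q i := by
  rw [Option.map_eq_none_iff, List.find?_eq_none]
  constructor
  · intro h i hQ
    exact h i (List.mem_finRange i) ((hpq i).2 hQ)
  · intro h i _ hp
    exact h i ((hpq i).1 hp)

lemma findMap_exists {n : ℕ} {p : Fin n → Bool} {Q : Fin n → Prop}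
    (hpq : ∀ i, p i = true ↔ Q i) {i : Fin n} (h : Q i) :
    ∃ j : Fin n, ((List.finRange n).find? p).map Fin.val = some (j : ℕ) ∧ Q j ∧
      ∀ i' : Fin n, Q i' → j ≤ i' := by
  obtain ⟨j, hf, hji⟩ := find?_le ((hpq i).2 h)
  refine ⟨j, by rw [hf]; rfl, (hpq j).1 (find?_spec hf).1, fun i' hi' => ?_⟩
  by_contra hc
  push_neg at hc
  have := (find?_spec hf).2 i' hc
  rw [(hpq i').2 hi'] at this
  exact Bool.noConfusion this

/-! ### Characterizations of p1/p2 -/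

lemma p2_some_iff {n : ℕ} {w : Fin n → Fin 3} {m : ℕ} :
    p2 w = some m ↔ ∃ i : Fin n, (i : ℕ) = m ∧ w i = 2 ∧ ∀ j : Fin n, j < i → ¬ w j = 2 := by
  rw [p2]
  exact findMap_some_iff (fun i => by simp)

lemma p2_none_iff {n : ℕ} {w : Fin n → Fin 3} :
    p2 w = none ↔ ∀ i : Fin n, ¬ w i = 2 := by
  rw [p2]
  exact findMap_none_iff (fun i => by simp)

lemma p2_exists {n : ℕ} {w : Fin n → Fin 3} {i : Fin n} (h : w i = 2) :
    ∃ j : Fin n, p2 w = some (j : ℕ) ∧ w j = 2 ∧ ∀ i' : Fin n, w i' = 2 → j ≤ i' := by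
  rw [p2]
  exact findMap_exists (fun i => by simp) h

lemma p1_some_iff {n : ℕ} {w : Fin n → Fin 3} {m : ℕ} :
    p1 w = some m ↔ ∃ i : Fin n, (i : ℕ) = m ∧
      (w i = 1 ∧ ∀ e : Fin n, e ≤ i → ¬ w e = 2) ∧
      ∀ j : Fin n, j < i → ¬ (w j = 1 ∧ ∀ e : Fin n, e ≤ j → ¬ w e = 2) := by
  rw [p1]
  exact findMap_some_iff (fun i => by simp)

lemma p1_none_iff {n : ℕ} {w : Fin n → Fin 3} :
    p1 w = none ↔ ∀ i : Fin n, ¬ (w i = 1 ∧ ∀ e : Fin n, e ≤ i → ¬ w e = 2) := by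
  rw [p1]
  exact findMap_none_iff (fun i => by simp)

lemma p1_exists {n : ℕ} {w : Fin n → Fin 3} {i : Fin n}
    (h : w i = 1 ∧ ∀ e : Fin n, e ≤ i → ¬ w e = 2) :
    ∃ j : Fin n, p1 w = some (j : ℕ) ∧
      (w j = 1 ∧ ∀ e : Fin n, e ≤ j → ¬ w e = 2) ∧
      ∀ i' : Fin n, (w i' = 1 ∧ ∀ e : Fin n, e ≤ i' → ¬ w e = 2) → j ≤ i' := by
  rw [p1]
  exact findMap_exists (fun i => by simp) h

/-! ### Pm determined by p1, p2 and conversely -/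

lemma Pm_two_iff_p2 {n : ℕ} {w : Fin n → Fin 3} {s : ℕ} :
    Pm w s = 2 ↔ ∃ m, m < s ∧ p2 w = some m := by
  rw [Pm_eq_two_iff]
  constructor
  · rintro ⟨i, hi, h2⟩
    obtain ⟨j, hj, _, hmin⟩ := p2_exists h2
    have : (j : ℕ) ≤ (i : ℕ) := hmin i h2
    exact ⟨(j : ℕ), by omega, hj⟩
  · rintro ⟨m, hms, hm⟩
    obtain ⟨i, him, hQ, _⟩ := p2_some_iff.1 hm
    exact ⟨i, by omega, hQ⟩

lemma all_zero_of_no_first {n : ℕ} {w : Fin n → Fin 3} {s : ℕ}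
    (h2 : ∀ m, p2 w = some m → ¬ m < s) (h1 : ∀ m, p1 w = some m → ¬ m < s) :
    ∀ i : Fin n, (i : ℕ) < s → w i = 0 := by
  suffices H : ∀ k : ℕ, ∀ i : Fin n, (i : ℕ) = k → (i : ℕ) < s → w i = 0 by
    exact fun i hi => H (i : ℕ) i rfl hi
  intro k
  induction k using Nat.strong_induction_on with
  | _ k ih =>
    rintro i rfl his
    rcases fin3_cases (w i) with h0 | h1' | h2'
    · exact h0
    · exfalso
      have hq : w i = 1 ∧ ∀ e : Fin n, e ≤ i → ¬ w e = 2 := by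
        refine ⟨h1', fun e he => ?_⟩
        rcases eq_or_lt_of_le he with rfl | hlt
        · rw [h1']; decide
        · have hev : (e : ℕ) < (i : ℕ) := hlt
          rw [ih (e : ℕ) hev e rfl (by omega)]; decide
      obtain ⟨j, hj, _, hmin⟩ := p1_exists hq
      have hji : (j : ℕ) ≤ (i : ℕ) := hmin i hq
      exact h1 (j : ℕ) hj (by omega)
    · exfalso
      obtain ⟨j, hj, _, hmin⟩ := p2_exists h2'
      have hji : (j : ℕ) ≤ (i : ℕ) := hmin i h2'
      exact h2 (j : ℕ) hj (by omega)

lemma Pm_zero_iff_p {n : ℕ} {w : Fin n → Fin 3} {s : ℕ} :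
    Pm w s = 0 ↔ (∀ m, p2 w = some m → ¬ m < s) ∧ (∀ m, p1 w = some m → ¬ m < s) := by
  rw [Pm_eq_zero_iff]
  constructor
  · intro h
    constructor
    · intro m hm hms
      obtain ⟨i, him, hQ, _⟩ := p2_some_iff.1 hm
      rw [h i (by omega)] at hQ
      exact absurd hQ (by decide)
    · intro m hm hms
      obtain ⟨i, him, hQ, _⟩ := p1_some_iff.1 hm
      have := hQ.1
      rw [h i (by omega)] at this
      exact absurd this (by decide)
  · rintro ⟨h2, h1⟩
    exact all_zero_of_no_first h2 h1

lemma Pm_congr {n : ℕ} {u v : Fin n → Fin 3} (h2 : p2 u = p2 v) (h1 : p1 u = p1 v)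
    (s : ℕ) : Pm u s = Pm v s := by
  have e2 : Pm u s = 2 ↔ Pm v s = 2 := by rw [Pm_two_iff_p2, Pm_two_iff_p2, h2]
  have e0 : Pm u s = 0 ↔ Pm v s = 0 := by rw [Pm_zero_iff_p, Pm_zero_iff_p, h2, h1]
  rcases fin3_cases (Pm u s) with h | h | h
  · rw [h]; exact (e0.1 h).symm
  · rcases fin3_cases (Pm v s) with h' | h' | h'
    · rw [e0.2 h'] at h; exact absurd h (by decide)
    · rw [h, h']
    · rw [e2.2 h'] at h; exact absurd h (by decide)
  · rw [h]; exact (e2.1 h).symm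

lemma p2_congr {n : ℕ} {u v : Fin n → Fin 3} (h : ∀ s, Pm u s = Pm v s) :
    p2 u = p2 v := by
  have aux : ∀ (u v : Fin n → Fin 3), (∀ s, Pm u s = Pm v s) →
      ∀ m, p2 u = some m → p2 v = some m := by
    intro u v h m hm
    obtain ⟨i, him, hQ, hmin⟩ := p2_some_iff.1 hm
    have h2 : Pm v ((i : ℕ) + 1) = 2 := by
      rw [← h]
      exact Pm_eq_two_iff.2 ⟨i, by omega, hQ⟩
    have h2' : ¬ Pm v (i : ℕ) = 2 := by
      rw [← h]
      intro hc
      obtain ⟨j, hjlt, hj2⟩ := Pm_eq_two_iff.1 hc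
      exact hmin j (by exact hjlt) hj2
    obtain ⟨j, hjlt, hj2⟩ := Pm_eq_two_iff.1 h2
    have hji : (j : ℕ) = (i : ℕ) := by
      by_contra hne
      exact h2' (Pm_eq_two_iff.2 ⟨j, by omega, hj2⟩)
    rw [p2_some_iff]
    refine ⟨j, by omega, hj2, fun k hk hk2 => ?_⟩
    have hkj : (k : ℕ) < (j : ℕ) := hk
    exact h2' (Pm_eq_two_iff.2 ⟨k, by omega, hk2⟩)
  cases hu : p2 u with
  | some m => exact (aux u v h m hu).symm ▸ rfl
  | none =>
    cases hv : p2 v with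
    | none => rfl
    | some m =>
      have := aux v u (fun s => (h s).symm) m hv
      rw [hu] at this
      exact nomatch this

lemma p1_congr {n : ℕ} {u v : Fin n → Fin 3} (h : ∀ s, Pm u s = Pm v s) :
    p1 u = p1 v := by
  have aux : ∀ (u v : Fin n → Fin 3), (∀ s, Pm u s = Pm v s) →
      ∀ m, p1 u = some m → p1 v = some m := by
    intro u v h m hm
    obtain ⟨i, him, ⟨h1, hno2⟩, hmin⟩ := p1_some_iff.1 hm
    have hz : ∀ k : Fin n, k < i → u k = 0 := by
      suffices H : ∀ c : ℕ, ∀ k : Fin n, (k : ℕ) = c → k < i → u k = 0 by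
        exact fun k hk => H (k : ℕ) k rfl hk
      intro c
      induction c using Nat.strong_induction_on with
      | _ c ih =>
        rintro k rfl hki
        rcases fin3_cases (u k) with h0 | h1' | h2'
        · exact h0
        · exfalso
          apply hmin k hki
          refine ⟨h1', fun e he => ?_⟩
          rcases eq_or_lt_of_le he with rfl | hlt
          · rw [h1']; decide
          · have hev : (e : ℕ) < (k : ℕ) := hlt
            rw [ih (e : ℕ) hev e rfl (lt_trans hlt hki)]; decide
        · exact absurd h2' (hno2 k (le_of_lt hki))
    have hu0 : Pm u (i : ℕ) = 0 := Pm_eq_zero_iff.2 fun k hk => hz k hk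
    have hu1 : Pm u ((i : ℕ) + 1) = 1 := by
      apply le_antisymm
      · refine Pm_le fun k hk => ?_
        have := hno2 k (by omega : (k : ℕ) ≤ (i : ℕ))
        omega
      · have hle := le_Pm (w := u) (i := i) (by omega : (i : ℕ) < (i : ℕ) + 1)
        rw [h1] at hle
        exact hle
    have hv0 : Pm v (i : ℕ) = 0 := by rw [← h]; exact hu0
    have hv1 : Pm v ((i : ℕ) + 1) = 1 := by rw [← h]; exact hu1
    have hzv : ∀ k : Fin n, k < i → v k = 0 := fun k hk =>
      Pm_eq_zero_iff.1 hv0 k hk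
    have hvi : v i = 1 := by
      rcases fin3_cases (v i) with h0 | h1' | h2'
      · exfalso
        have : Pm v ((i : ℕ) + 1) = 0 := Pm_eq_zero_iff.2 fun k hk => by
          rcases eq_or_lt_of_le (by omega : (k : ℕ) ≤ (i : ℕ)) with heq | hlt
          · rw [show k = i from Fin.ext heq]; exact h0
          · exact hzv k hlt
        omega
      · exact h1'
      · exfalso
        have : Pm v ((i : ℕ) + 1) = 2 := Pm_eq_two_iff.2 ⟨i, by omega, h2'⟩
        omega
    rw [p1_some_iff]
    refine ⟨i, him, ⟨hvi, fun e he => ?_⟩, fun j hj hQ => ?_⟩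
    · rcases eq_or_lt_of_le he with rfl | hlt
      · rw [hvi]; decide
      · rw [hzv e hlt]; decide
    · have := hQ.1
      rw [hzv j hj] at this
      exact absurd this (by decide)
  cases hu : p1 u with
  | some m => exact (aux u v h m hu).symm ▸ rfl
  | none =>
    cases hv : p1 v with
    | none => rfl
    | some m =>
      have := aux v u (fun s => (h s).symm) m hv
      rw [hu] at this
      exact nomatch this

/-! ### Embedding lemmas -/

lemma embed_zero {n : ℕ} {u v : Fin n → Fin 3} : caEmbed n u 0 v 0 = 0 := by
  simp [caEmbed]

lemma S_right_eq {n : ℕ} {u v : Fin n → Fin 3} {s : ℕ} (hs : s ≤ n) :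
    S (caEmbed n u 0 v) 1 (s : ℤ) = Pm v s := by
  apply le_antisymm
  · refine S_le fun q h1 h2 => ?_
    have hq : caEmbed n u 0 v q = v ⟨(q - 1).toNat, by omega⟩ := by
      simp only [caEmbed]
      rw [dif_pos ⟨h1, by omega⟩]
    rw [hq]
    exact le_Pm (by simp; omega)
  · refine Pm_le fun i hi => ?_
    have hval : caEmbed n u 0 v (((i : ℕ) : ℤ) + 1) = v i := by
      simp only [caEmbed]
      rw [dif_pos ⟨by omega, by omega⟩]
      exact congrArg v (Fin.ext (by simp))
    have := le_S (x := caEmbed n u 0 v) (((i : ℕ) : ℤ) + 1) (a := 1) (b := (s : ℤ))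
      (by omega) (by omega)
    rwa [hval] at this

lemma S_left_eq {n : ℕ} {u v : Fin n → Fin 3} {s : ℕ} (hs : s ≤ n) :
    S (caEmbed n u 0 v) (-(s : ℤ)) (-1) = Pm u s := by
  apply le_antisymm
  · refine S_le fun q h1 h2 => ?_
    have hq : caEmbed n u 0 v q = u ⟨(-q - 1).toNat, by omega⟩ := by
      simp only [caEmbed]
      rw [dif_neg (by omega), dif_pos ⟨by omega, by omega⟩]
    rw [hq]
    exact le_Pm (by simp; omega)
  · refine Pm_le fun i hi => ?_
    have hval : caEmbed n u 0 v (-((i : ℕ) : ℤ) - 1) = u i := by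
      simp only [caEmbed]
      rw [dif_neg (by omega), dif_pos ⟨by omega, by omega⟩]
      exact congrArg u (Fin.ext (by simp))
    have := le_S (x := caEmbed n u 0 v) (-((i : ℕ) : ℤ) - 1) (a := -(s : ℤ)) (b := (-1 : ℤ))
      (by omega) (by omega)
    rwa [hval] at this

end ThreeStateAux

open ThreeStateAux in
/-- For the 3-state CA `g(i,j,k) = 0` if `j = 0 ∧ i = k` and `max i (max j k)` otherwise:
a cell in state `0` remains in state `0` after `n` steps iff the positions of the nearest
state-2 cells on the two sides agree (or neither exists), and likewise for the nearest
state-1 cells occurring before any state-2 cell. -/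
theorem threeState_center_zero (g : Fin 3 → Fin 3 → Fin 3 → Fin 3)
    (hg : ∀ i j k : Fin 3, g i j k = if j = 0 ∧ i = k then 0 else max i (max j k)) :
    ∀ n : ℕ, 1 ≤ n → ∀ u v : Fin n → Fin 3,
      (caApply g n u 0 v = 0 ↔
        ((p2 u = none ∧ p2 v = none) ∨ p2 u = p2 v) ∧
        ((p1 u = none ∧ p1 v = none) ∨ p1 u = p1 v)) := by
  intro n hn u v
  have hmain := mainInv g hg n (caEmbed n u 0 v)
  rw [caApply, hmain]
  have hiff : Fc (caEmbed n u 0 v) n = 0 ↔ Zc (caEmbed n u 0 v) n := by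
    rw [Fc]
    split_ifs with h
    · simp [h]
    · have hne : S (caEmbed n u 0 v) (-(n : ℤ)) (n : ℤ) ≠ 0 := fun h0 => h (S_eq_zero_Zc h0)
      simp [h, hne]
  rw [hiff]
  have hZ : Zc (caEmbed n u 0 v) n ↔ ∀ s : ℕ, Pm u s = Pm v s := by
    constructor
    · intro hZc s
      rcases le_or_gt s n with hs | hs
      · rcases Nat.eq_zero_or_pos s with rfl | hs1
        · rw [Pm_zero, Pm_zero]
        · have := hZc.2 (s : ℤ) (by omega) (by omega)
          rwa [S_left_eq hs, S_right_eq hs] at this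
      · rw [Pm_stab (le_of_lt hs), Pm_stab (le_of_lt hs)]
        have := hZc.2 (n : ℤ) (by omega) (by omega)
        rwa [S_left_eq le_rfl, S_right_eq le_rfl] at this
    · intro hP
      refine ⟨embed_zero, fun s h1 h2 => ?_⟩
      have hs' : s = ((s.toNat : ℕ) : ℤ) := by omega
      rw [hs', S_left_eq (by omega), S_right_eq (by omega), hP]
  rw [hZ]
  constructor
  · intro hP
    exact ⟨Or.inr (p2_congr hP), Or.inr (p1_congr hP)⟩
  · rintro ⟨h2, h1⟩
    have h2' : p2 u = p2 v := by
      rcases h2 with ⟨ha, hb⟩ | h2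
      · rw [ha, hb]
      · exact h2
    have h1' : p1 u = p1 v := by
      rcases h1 with ⟨ha, hb⟩ | h1
      · rw [ha, hb]
      · exact h1
    exact fun s => Pm_congr h2' h1' s
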